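/- arXiv:math/0311329 — 5 statements merged into one kernel-verified Lean document; each statement's English description precedes it below -/
import Mathlib

section
/- Let A be a unital Banach algebra (for example, the algebra of continuous linear endomorphisms of a Banach space) and let N₁, N₂ ∈ A satisfy N₁² = 0, N₂² = 0 and 2·‖N₁‖·‖N₂‖ < 1. Then 1 + N₁ + N₂ is invertible in A and ‖(1 + N₁ + N₂)⁻¹‖ ≤ (1 + ‖N₁‖ + ‖N₂‖)/(1 − 2·‖N₁‖·‖N₂‖). -/
/-- In a unital Banach algebra, if `N₁² = 0`, `N₂² = 0` and `2‖N₁‖‖N₂‖ < 1`, then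
`1 + N₁ + N₂` is invertible with
`‖(1 + N₁ + N₂)⁻¹‖ ≤ (1 + ‖N₁‖ + ‖N₂‖)/(1 - 2‖N₁‖‖N₂‖)`. -/
theorem stmt_1 {A : Type*} [NormedRing A] [NormOneClass A] [CompleteSpace A]
    [NormedAlgebra ℝ A] (N₁ N₂ : A)
    (h₁ : N₁ ^ 2 = 0) (h₂ : N₂ ^ 2 = 0)
    (hnorm : 2 * ‖N₁‖ * ‖N₂‖ < 1) :
    ∃ u : Aˣ, (u : A) = 1 + N₁ + N₂ ∧
      ‖((u⁻¹ : Aˣ) : A)‖ ≤ (1 + ‖N₁‖ + ‖N₂‖) / (1 - 2 * ‖N₁‖ * ‖N₂‖) := by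
  set a := ‖N₁‖ with ha
  set b := ‖N₂‖ with hb
  have ha0 : 0 ≤ a := norm_nonneg _
  have hb0 : 0 ≤ b := norm_nonneg _
  have hab1 : a * b < 1 := by nlinarith
  have hc : ‖N₁ * N₂‖ < 1 := lt_of_le_of_lt (norm_mul_le _ _) hab1
  have hc0 : 0 ≤ ‖N₁ * N₂‖ := norm_nonneg _
  have hcab : ‖N₁ * N₂‖ ≤ a * b := norm_mul_le _ _
  let u₁ : Aˣ := ⟨1 + N₁, 1 - N₁,
    by rw [show (1 + N₁) * (1 - N₁) = 1 - N₁ ^ 2 by noncomm_ring, h₁, sub_zero],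
    by rw [show (1 - N₁) * (1 + N₁) = 1 - N₁ ^ 2 by noncomm_ring, h₁, sub_zero]⟩
  let u₂ : Aˣ := ⟨1 + N₂, 1 - N₂,
    by rw [show (1 + N₂) * (1 - N₂) = 1 - N₂ ^ 2 by noncomm_ring, h₂, sub_zero],
    by rw [show (1 - N₂) * (1 + N₂) = 1 - N₂ ^ 2 by noncomm_ring, h₂, sub_zero]⟩
  let v : Aˣ := Units.oneSub (N₁ * N₂) hc
  refine ⟨u₁ * v * u₂, ?_, ?_⟩
  · show (1 + N₁) * (1 - N₁ * N₂) * (1 + N₂) = 1 + N₁ + N₂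
    rw [show (1 + N₁) * (1 - N₁ * N₂) * (1 + N₂)
        = 1 + N₁ + N₂ - (N₁ * N₂ ^ 2 + N₁ ^ 2 * N₂ + N₁ ^ 2 * N₂ ^ 2) by noncomm_ring,
      h₁, h₂]
    simp
  · have hval : (((u₁ * v * u₂)⁻¹ : Aˣ) : A) = (1 - N₂) * (∑' n : ℕ, (N₁ * N₂) ^ n) * (1 - N₁) := by
      rw [mul_inv_rev, mul_inv_rev, Units.val_mul, Units.val_mul, ← mul_assoc]
      rfl
    have hv : ‖∑' n : ℕ, (N₁ * N₂) ^ n‖ ≤ (1 - ‖N₁ * N₂‖)⁻¹ := by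
      have := tsum_geometric_le_of_norm_lt_one (N₁ * N₂) hc
      simpa using this
    set c := ‖N₁ * N₂‖ with hcdef
    have h1c : 0 < 1 - c := by linarith
    have h1ab : 0 < 1 - a * b := by linarith
    have h12 : 0 < 1 - 2 * a * b := by linarith
    have hbound : ‖(((u₁ * v * u₂)⁻¹ : Aˣ) : A)‖ ≤ (1 + b) * (1 - c)⁻¹ * (1 + a) := by
      rw [hval]
      calc ‖(1 - N₂) * (∑' n : ℕ, (N₁ * N₂) ^ n) * (1 - N₁)‖
          ≤ ‖(1 - N₂) * (∑' n : ℕ, (N₁ * N₂) ^ n)‖ * ‖1 - N₁‖ := norm_mul_le _ _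
        _ ≤ ‖1 - N₂‖ * ‖∑' n : ℕ, (N₁ * N₂) ^ n‖ * ‖1 - N₁‖ :=
            mul_le_mul_of_nonneg_right (norm_mul_le _ _) (norm_nonneg _)
        _ ≤ (1 + b) * (1 - c)⁻¹ * (1 + a) := by
            have hn1 : ‖(1 : A) - N₁‖ ≤ 1 + a := (norm_sub_le _ _).trans (by simp [ha])
            have hn2 : ‖(1 : A) - N₂‖ ≤ 1 + b := (norm_sub_le _ _).trans (by simp [hb])
            gcongr
    refine hbound.trans ?_
    have step1 : (1 + b) * (1 - c)⁻¹ * (1 + a) ≤ (1 + b) * (1 - a * b)⁻¹ * (1 + a) := by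
      gcongr
    refine step1.trans ?_
    rw [show (1 + b) * (1 - a * b)⁻¹ * (1 + a) = ((1 + b) * (1 + a)) / (1 - a * b) by ring,
      div_le_div_iff₀ h1ab h12]
    nlinarith [mul_nonneg ha0 hb0, mul_nonneg (mul_nonneg ha0 hb0) (mul_nonneg ha0 hb0),
      mul_nonneg (mul_nonneg ha0 ha0) hb0, mul_nonneg ha0 (mul_nonneg hb0 hb0)]
end

section
/- Let E be a Banach space, T : E → E a continuous linear operator whose range is a closed subspace, and 0 ≤ η ≤ 1/2 a real number such that ‖z − T z‖ ≤ η·‖z‖ for every z in the range of T. Then T maps range T bijectively onto itself, and E decomposes as the (internal) direct sum E = range T ⊕ ker T; i.e., range T and ker T are complementary subspaces of E. -/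
/-- If `T : E → E` is a continuous linear operator with closed range on a Banach space,
`0 ≤ η ≤ 1/2`, and `‖z - T z‖ ≤ η‖z‖` for every `z` in the range of `T`, then `T` maps
its range bijectively onto itself and `E = range T ⊕ ker T` (they are complementary). -/
theorem stmt_4 {E : Type*} [NormedAddCommGroup E] [NormedSpace ℝ E] [CompleteSpace E]
    (T : E →L[ℝ] E) (hclosed : IsClosed (LinearMap.range (T : E →ₗ[ℝ] E) : Set E))
    (η : ℝ) (hη0 : 0 ≤ η) (hη : η ≤ 1 / 2)
    (h : ∀ z ∈ LinearMap.range (T : E →ₗ[ℝ] E), ‖z - T z‖ ≤ η * ‖z‖) :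
    Set.BijOn T (LinearMap.range (T : E →ₗ[ℝ] E) : Set E) (LinearMap.range (T : E →ₗ[ℝ] E) : Set E) ∧
      IsCompl (LinearMap.range (T : E →ₗ[ℝ] E)) (LinearMap.ker (T : E →ₗ[ℝ] E)) := by
  set R : Submodule ℝ E := LinearMap.range (T : E →ₗ[ℝ] E) with hR
  haveI : CompleteSpace R := hclosed.completeSpace_coe
  -- the restriction of T to its range as an operator on R
  set S : R →L[ℝ] R :=
    ContinuousLinearMap.codRestrict (T.comp R.subtypeL) R
      (fun x => LinearMap.mem_range_self (T : E →ₗ[ℝ] E) (x : E)) with hS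
  have hSapp : ∀ x : R, ((S x : E)) = T (x : E) := fun x => rfl
  -- ‖1 - S‖ ≤ η < 1
  have hnorm : ‖(1 : R →L[ℝ] R) - S‖ ≤ η := by
    refine ContinuousLinearMap.opNorm_le_bound _ hη0 fun x => ?_
    have : ‖((1 : R →L[ℝ] R) - S) x‖ = ‖(x : E) - T (x : E)‖ := by
      simp [ContinuousLinearMap.sub_apply, Submodule.norm_coe, hSapp]
    rw [this]
    exact h (x : E) x.2
  have hlt : ‖(1 : R →L[ℝ] R) - S‖ < 1 := lt_of_le_of_lt hnorm (by linarith)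
  -- S is a unit, hence bijective
  have hSunit : IsUnit S := by
    have := (Units.oneSub ((1 : R →L[ℝ] R) - S) hlt).isUnit
    simpa using this
  have hSbij : Function.Bijective S :=
    ContinuousLinearMap.isUnit_iff_bijective.1 hSunit
  -- surjectivity of T on R
  have hsurj : ∀ y ∈ R, ∃ z ∈ R, T z = y := by
    intro y hy
    obtain ⟨x, hx⟩ := hSbij.2 ⟨y, hy⟩
    exact ⟨(x : E), x.2, congrArg Subtype.val hx⟩
  -- injectivity of T on R
  have hinj : ∀ z ∈ R, T z = 0 → z = 0 := by
    intro z hz hz0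
    have h1 : ‖z‖ ≤ η * ‖z‖ := by
      have := h z hz
      rwa [hz0, sub_zero] at this
    have h2 : ‖z‖ ≤ 0 := by nlinarith [norm_nonneg z]
    exact norm_le_zero_iff.1 h2
  constructor
  · refine ⟨fun x _ => LinearMap.mem_range_self (T : E →ₗ[ℝ] E) x, ?_, ?_⟩
    · intro a ha b hb hab
      have : T (a - b) = 0 := by simp [map_sub, hab]
      have := hinj (a - b) (Submodule.sub_mem R ha hb) this
      exact sub_eq_zero.1 this
    · intro y hy
      obtain ⟨z, hz, hTz⟩ := hsurj y hy
      exact ⟨z, hz, hTz⟩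
  · constructor
    · rw [Submodule.disjoint_def]
      intro x hx hker
      exact hinj x hx (LinearMap.mem_ker.1 hker)
    · rw [codisjoint_iff, eq_top_iff]
      intro x _
      obtain ⟨z, hz, hTz⟩ := hsurj (T x) (LinearMap.mem_range_self (T : E →ₗ[ℝ] E) x)
      have hker : x - z ∈ LinearMap.ker (T : E →ₗ[ℝ] E) := by
        rw [LinearMap.mem_ker, map_sub, ContinuousLinearMap.coe_coe, hTz, sub_self]
      have : x = z + (x - z) := by abel
      rw [this]
      exact Submodule.add_mem_sup hz hker
end

section
/- Let E be a Banach space, T : E → E a continuous linear operator whose range is a closed subspace, and 0 ≤ η ≤ 1/2 a real number such that ‖z − T z‖ ≤ η·‖z‖ for every z in the range of T. If ζ ∈ E is written ζ = z + z₀ with z ∈ range T and z₀ ∈ ker T, then ‖z‖ ≤ 2·‖T‖·‖ζ‖ and ‖z₀‖ ≤ (1 + 2·‖T‖)·‖ζ‖; in particular ‖z‖ + ‖z₀‖ ≤ (1 + 4·‖T‖)·‖ζ‖. -/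
/-- Let `T : E → E` be a continuous linear operator with closed range on a Banach space,
`0 ≤ η ≤ 1/2`, with `‖z - T z‖ ≤ η‖z‖` for every `z` in the range of `T`. If
`ζ = z + z₀` with `z ∈ range T` and `z₀ ∈ ker T`, then `‖z‖ ≤ 2‖T‖‖ζ‖`,
`‖z₀‖ ≤ (1 + 2‖T‖)‖ζ‖`, and `‖z‖ + ‖z₀‖ ≤ (1 + 4‖T‖)‖ζ‖`. -/
theorem stmt_6 {E : Type*} [NormedAddCommGroup E] [NormedSpace ℝ E] [CompleteSpace E]
    (T : E →L[ℝ] E) (hclosed : IsClosed (LinearMap.range (T : E →ₗ[ℝ] E) : Set E))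
    (η : ℝ) (hη0 : 0 ≤ η) (hη : η ≤ 1 / 2)
    (h : ∀ z ∈ LinearMap.range (T : E →ₗ[ℝ] E), ‖z - T z‖ ≤ η * ‖z‖)
    (ζ z z₀ : E) (hz : z ∈ LinearMap.range (T : E →ₗ[ℝ] E)) (hz₀ : z₀ ∈ LinearMap.ker (T : E →ₗ[ℝ] E))
    (hsum : ζ = z + z₀) :
    ‖z‖ ≤ 2 * ‖T‖ * ‖ζ‖ ∧ ‖z₀‖ ≤ (1 + 2 * ‖T‖) * ‖ζ‖ ∧
      ‖z‖ + ‖z₀‖ ≤ (1 + 4 * ‖T‖) * ‖ζ‖ := by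
  have hTz : T ζ = T z := by
    have hk : T z₀ = 0 := hz₀
    simp [hsum, map_add, hk]
  have h1 : ‖z - T z‖ ≤ (1/2) * ‖z‖ := by
    calc ‖z - T z‖ ≤ η * ‖z‖ := h z hz
    _ ≤ (1/2) * ‖z‖ := by nlinarith [norm_nonneg z]
  have h2 : ‖z‖ ≤ 2 * ‖T z‖ := by
    have := norm_sub_norm_le z (T z)
    linarith
  have hTzζ : ‖T z‖ ≤ ‖T‖ * ‖ζ‖ := hTz ▸ T.le_opNorm ζ
  have hzb : ‖z‖ ≤ 2 * ‖T‖ * ‖ζ‖ := by linarith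
  have hz0 : ‖z₀‖ ≤ (1 + 2 * ‖T‖) * ‖ζ‖ := by
    have : z₀ = ζ - z := by rw [hsum]; abel
    rw [this]
    calc ‖ζ - z‖ ≤ ‖ζ‖ + ‖z‖ := norm_sub_le _ _
    _ ≤ (1 + 2 * ‖T‖) * ‖ζ‖ := by linarith
  exact ⟨hzb, hz0, by linarith⟩
end

section
/- Let E and F be Banach spaces, Π : F → F a continuous linear projection (Π∘Π = Π), and D : E → F, R₁ : F → E, R₂ : F → E continuous linear maps satisfying: R₁∘Π = 0; (id_F − Π)∘D∘R₁ = id_F − Π; R₂∘(id_F − Π) = 0; and Π∘D∘R₂ = Π. Define N₁ = Π∘D∘R₁ and N₂ = (id_F − Π)∘D∘R₂. Then: (i) N₁∘N₁ = 0 and N₂∘N₂ = 0; (ii) D∘(R₁ + R₂) = id_F + N₁ + N₂; and (iii) if moreover 2·‖N₁‖·‖N₂‖ < 1, then D admits a continuous linear right inverse R : F → E with D∘R = id_F and ‖R‖ ≤ (‖R₁‖ + ‖R₂‖)·(1 + ‖N₁‖ + ‖N₂‖)/(1 − 2·‖N₁‖·‖N₂‖). -/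
/-- Abstract construction of a full right inverse from two partial right inverses.
Let `P : F → F` be a continuous linear projection and `D, R₁, R₂` continuous linear
maps with `R₁∘P = 0`, `(id - P)∘D∘R₁ = id - P`, `R₂∘(id - P) = 0`, `P∘D∘R₂ = P`.
With `N₁ = P∘D∘R₁` and `N₂ = (id - P)∘D∘R₂`: (i) `N₁² = 0`, `N₂² = 0`;
(ii) `D∘(R₁ + R₂) = id + N₁ + N₂`; (iii) if `2‖N₁‖‖N₂‖ < 1`, then `D` has a
continuous linear right inverse `R` with
`‖R‖ ≤ (‖R₁‖ + ‖R₂‖)(1 + ‖N₁‖ + ‖N₂‖)/(1 - 2‖N₁‖‖N₂‖)`. -/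
theorem stmt_13 {E F : Type*}
    [NormedAddCommGroup E] [NormedSpace ℝ E] [CompleteSpace E]
    [NormedAddCommGroup F] [NormedSpace ℝ F] [CompleteSpace F]
    (P : F →L[ℝ] F) (hP : P.comp P = P)
    (D : E →L[ℝ] F) (R₁ R₂ : F →L[ℝ] E)
    (h₁ : R₁.comp P = 0)
    (h₂ : (ContinuousLinearMap.id ℝ F - P).comp (D.comp R₁) =
      ContinuousLinearMap.id ℝ F - P)
    (h₃ : R₂.comp (ContinuousLinearMap.id ℝ F - P) = 0)
    (h₄ : P.comp (D.comp R₂) = P)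
    (N₁ N₂ : F →L[ℝ] F)
    (hN₁ : N₁ = P.comp (D.comp R₁))
    (hN₂ : N₂ = (ContinuousLinearMap.id ℝ F - P).comp (D.comp R₂)) :
    N₁.comp N₁ = 0 ∧ N₂.comp N₂ = 0 ∧
      D.comp (R₁ + R₂) = ContinuousLinearMap.id ℝ F + N₁ + N₂ ∧
      (2 * ‖N₁‖ * ‖N₂‖ < 1 →
        ∃ R : F →L[ℝ] E, D.comp R = ContinuousLinearMap.id ℝ F ∧
          ‖R‖ ≤ (‖R₁‖ + ‖R₂‖) * (1 + ‖N₁‖ + ‖N₂‖) / (1 - 2 * ‖N₁‖ * ‖N₂‖)) := by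
  -- pointwise versions of hypotheses
  have e₁ : ∀ y, R₁ (P y) = 0 := fun y => congrFun (congrArg DFunLike.coe h₁) y
  have e₂ : ∀ y, D (R₁ y) - P (D (R₁ y)) = y - P y := fun y => by
    have := congrFun (congrArg DFunLike.coe h₂) y; simpa using this
  have e₃ : ∀ y, R₂ (y - P y) = 0 := fun y => by
    have := congrFun (congrArg DFunLike.coe h₃) y; simpa using this
  have e₄ : ∀ y, P (D (R₂ y)) = P y := fun y => congrFun (congrArg DFunLike.coe h₄) y
  have key1 : N₁.comp N₁ = 0 := by
    ext x
    simp only [hN₁, ContinuousLinearMap.comp_apply, ContinuousLinearMap.zero_apply]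
    rw [e₁]; simp
  have key2 : N₂.comp N₂ = 0 := by
    ext x
    simp only [hN₂, ContinuousLinearMap.comp_apply, ContinuousLinearMap.sub_apply,
      ContinuousLinearMap.id_apply, ContinuousLinearMap.zero_apply]
    rw [e₃]; simp
  have key3 : D.comp (R₁ + R₂) = ContinuousLinearMap.id ℝ F + N₁ + N₂ := by
    ext x
    simp only [hN₁, hN₂, ContinuousLinearMap.comp_apply, ContinuousLinearMap.add_apply,
      ContinuousLinearMap.sub_apply, ContinuousLinearMap.id_apply, map_add]
    rw [e₄]
    linear_combination (norm := abel) e₂ x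
  refine ⟨key1, key2, key3, fun hsmall => ?_⟩
  -- work in the ring of endomorphisms
  set M : F →L[ℝ] F := N₁ * N₂ + N₂ * N₁ with hM
  have hMnorm : ‖M‖ ≤ 2 * ‖N₁‖ * ‖N₂‖ := by
    calc ‖M‖ ≤ ‖N₁ * N₂‖ + ‖N₂ * N₁‖ := norm_add_le _ _
    _ ≤ ‖N₁‖ * ‖N₂‖ + ‖N₂‖ * ‖N₁‖ := add_le_add (norm_mul_le _ _) (norm_mul_le _ _)
    _ = 2 * ‖N₁‖ * ‖N₂‖ := by ring
  have hMlt : ‖M‖ < 1 := lt_of_le_of_lt hMnorm hsmall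
  -- geometric series inverse of 1 - M
  set T : F →L[ℝ] F := ∑' n : ℕ, M ^ n with hT
  have hTinv : (1 - M) * T = 1 := mul_neg_geom_series M hMlt
  have hTnorm : ‖T‖ ≤ (1 - ‖M‖)⁻¹ := by
    have h1 : ‖(1 : F →L[ℝ] F)‖ ≤ 1 := ContinuousLinearMap.norm_id_le
    have := tsum_geometric_le_of_norm_lt_one M hMlt
    linarith
  set S : F →L[ℝ] F := N₁ + N₂ with hS
  have hSq : S * S = M := by
    have k1 : N₁ * N₁ = 0 := key1
    have k2 : N₂ * N₂ = 0 := key2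
    simp only [hS, hM, add_mul, mul_add, k1, k2]
    abel
  set R : F →L[ℝ] E := (R₁ + R₂).comp ((1 - S) * T) with hR
  have hDR : D.comp R = ContinuousLinearMap.id ℝ F := by
    rw [hR, ← ContinuousLinearMap.comp_assoc, key3]
    have : (ContinuousLinearMap.id ℝ F + N₁ + N₂) = 1 + S := by
      rw [hS, ContinuousLinearMap.one_def]; abel
    rw [this, ← ContinuousLinearMap.mul_def, ← mul_assoc]
    have : (1 + S) * (1 - S) = 1 - M := by
      rw [← hSq]; noncomm_ring
    rw [this, hTinv, ContinuousLinearMap.one_def]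
  refine ⟨R, hDR, ?_⟩
  have hRn : ‖R‖ ≤ (‖R₁‖ + ‖R₂‖) * ((1 + ‖N₁‖ + ‖N₂‖) * (1 - ‖M‖)⁻¹) := by
    calc ‖R‖ ≤ ‖R₁ + R₂‖ * ‖(1 - S) * T‖ := ContinuousLinearMap.opNorm_comp_le _ _
    _ ≤ (‖R₁‖ + ‖R₂‖) * ((1 + ‖N₁‖ + ‖N₂‖) * (1 - ‖M‖)⁻¹) := by
        apply mul_le_mul (norm_add_le _ _)
        · calc ‖(1 - S) * T‖ ≤ ‖(1 : F →L[ℝ] F) - S‖ * ‖T‖ := norm_mul_le _ _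
          _ ≤ (1 + ‖N₁‖ + ‖N₂‖) * (1 - ‖M‖)⁻¹ := by
              apply mul_le_mul _ hTnorm (norm_nonneg _) (by positivity)
              calc ‖(1 : F →L[ℝ] F) - S‖ ≤ ‖(1 : F →L[ℝ] F)‖ + ‖S‖ := norm_sub_le _ _
              _ ≤ 1 + (‖N₁‖ + ‖N₂‖) :=
                  add_le_add ContinuousLinearMap.norm_id_le (norm_add_le _ _)
              _ = 1 + ‖N₁‖ + ‖N₂‖ := by ring
        · exact norm_nonneg _
        · positivity
  have hinv : (1 - ‖M‖)⁻¹ ≤ (1 - 2 * ‖N₁‖ * ‖N₂‖)⁻¹ := by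
    apply inv_anti₀ (by linarith) (by linarith)
  refine hRn.trans ?_
  rw [div_eq_mul_inv, mul_assoc]
  exact mul_le_mul_of_nonneg_left
    (mul_le_mul_of_nonneg_left hinv (by positivity)) (by positivity)
end

section
/- Let E and F be Banach spaces, Π : F → F a continuous linear projection (Π∘Π = Π), and D : E → F, R̃ : F → E continuous linear maps. Let 0 ≤ k ≤ 1/2 and suppose that ‖(id_F − Π)(D(R̃(ζ))) − ζ‖ ≤ k·‖ζ‖ for every ζ ∈ ker Π. Then there exists a continuous linear map R₁ : F → E with the following properties: (i) R₁(ζ) = 0 for every ζ in the range of Π; (ii) (id_F − Π)(D(R₁(ζ))) = ζ for every ζ ∈ ker Π; (iii) ‖R₁(ζ)‖ ≤ 2·‖R̃‖·‖ζ‖ for every ζ ∈ ker Π; and (iv) ‖R₁(ζ) − R̃(ζ)‖ ≤ 2·k·‖R̃‖·‖ζ‖ for every ζ ∈ ker Π. -/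
set_option maxHeartbeats 2000000

/-- Construction of the partial right inverse `R₁` on the kernel of a projection.
Let `P : F → F` be a continuous linear projection, `D : E → F`, `R' : F → E`
continuous linear maps, `0 ≤ k ≤ 1/2`, and suppose
`‖(id - P)(D(R' ζ)) - ζ‖ ≤ k‖ζ‖` for every `ζ ∈ ker P`. Then there is a continuous
linear `R₁ : F → E` with: (i) `R₁ = 0` on `range P`; (ii) `(id - P)(D(R₁ ζ)) = ζ`
for `ζ ∈ ker P`; (iii) `‖R₁ ζ‖ ≤ 2‖R'‖‖ζ‖` for `ζ ∈ ker P`;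
(iv) `‖R₁ ζ - R' ζ‖ ≤ 2k‖R'‖‖ζ‖` for `ζ ∈ ker P`. -/
theorem stmt_15 {E F : Type*}
    [NormedAddCommGroup E] [NormedSpace ℝ E] [CompleteSpace E]
    [NormedAddCommGroup F] [NormedSpace ℝ F] [CompleteSpace F]
    (P : F →L[ℝ] F) (hP : P.comp P = P)
    (D : E →L[ℝ] F) (R' : F →L[ℝ] E)
    (k : ℝ) (hk0 : 0 ≤ k) (hk : k ≤ 1 / 2)
    (happrox : ∀ ζ ∈ LinearMap.ker (P : F →ₗ[ℝ] F), ‖(D (R' ζ) - P (D (R' ζ))) - ζ‖ ≤ k * ‖ζ‖) :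
    ∃ R₁ : F →L[ℝ] E,
      (∀ ζ ∈ LinearMap.range (P : F →ₗ[ℝ] F), R₁ ζ = 0) ∧
      (∀ ζ ∈ LinearMap.ker (P : F →ₗ[ℝ] F), D (R₁ ζ) - P (D (R₁ ζ)) = ζ) ∧
      (∀ ζ ∈ LinearMap.ker (P : F →ₗ[ℝ] F), ‖R₁ ζ‖ ≤ 2 * ‖R'‖ * ‖ζ‖) ∧
      (∀ ζ ∈ LinearMap.ker (P : F →ₗ[ℝ] F), ‖R₁ ζ - R' ζ‖ ≤ 2 * k * ‖R'‖ * ‖ζ‖) := by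
  set K := LinearMap.ker (P : F →ₗ[ℝ] F) with hK
  haveI : CompleteSpace K := (ContinuousLinearMap.isClosed_ker P).completeSpace_coe
  have hPP : ∀ x, P (P x) = P x := fun x => ContinuousLinearMap.ext_iff.mp hP x
  have hQmem : ∀ x, (ContinuousLinearMap.id ℝ F - P) x ∈ K := by
    intro x
    rw [hK, LinearMap.mem_ker]
    simp [map_sub, hPP x]
  let Qr : F →L[ℝ] K := (ContinuousLinearMap.id ℝ F - P).codRestrict K hQmem
  let T : K →L[ℝ] K := Qr.comp (D.comp (R'.comp K.subtypeL))
  have hTapp : ∀ ζ : K, ((T ζ : F)) = D (R' ζ) - P (D (R' ζ)) := by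
    intro ζ; simp [T, Qr]
  have hQrker : ∀ ζ : K, Qr (ζ : F) = ζ := by
    intro ζ
    ext
    have : P (ζ : F) = 0 := ζ.2
    simp [Qr, this]
  have hnt : ‖(1 : K →L[ℝ] K) - T‖ ≤ k := by
    apply ContinuousLinearMap.opNorm_le_bound _ hk0
    intro ζ
    have h1 : ‖((1 : K →L[ℝ] K) - T) ζ‖ = ‖(D (R' ζ) - P (D (R' ζ))) - (ζ : F)‖ := by
      have e1 : ((((1 : K →L[ℝ] K) - T) ζ : K) : F) = (ζ : F) - ((T ζ : K) : F) := by
        simp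
      rw [show ‖((1 : K →L[ℝ] K) - T) ζ‖ = ‖((((1 : K →L[ℝ] K) - T) ζ : K) : F)‖ from rfl,
        e1, hTapp, ← norm_neg]
      congr 1
      abel
    rw [h1]
    exact happrox ζ ζ.2
  have hlt : ‖(1 : K →L[ℝ] K) - T‖ < 1 := lt_of_le_of_lt hnt (by linarith)
  obtain ⟨V, hVT, hTV⟩ : ∃ V : K →L[ℝ] K, V * T = 1 ∧ T * V = 1 := by
    refine ⟨↑(Units.oneSub ((1 : K →L[ℝ] K) - T) hlt)⁻¹, ?_, ?_⟩
    · have := (Units.oneSub ((1 : K →L[ℝ] K) - T) hlt).inv_mul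
      rwa [Units.val_oneSub, sub_sub_cancel] at this
    · have := (Units.oneSub ((1 : K →L[ℝ] K) - T) hlt).mul_inv
      rwa [Units.val_oneSub, sub_sub_cancel] at this
  have hVeq : V = 1 + V * ((1 : K →L[ℝ] K) - T) := by
    have h1 : V * (1 - ((1 : K →L[ℝ] K) - T)) = 1 := by
      rw [sub_sub_cancel]; exact hVT
    calc V = V * 1 := (mul_one V).symm
    _ = V * ((1 - ((1:K →L[ℝ] K) - T)) + (1 - T)) := by rw [sub_add_cancel]
    _ = 1 + V * (1 - T) := by rw [mul_add, h1]
  have hone : ‖(1 : K →L[ℝ] K)‖ ≤ 1 := by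
    rw [ContinuousLinearMap.one_def]; exact ContinuousLinearMap.norm_id_le
  have hVnorm : ‖V‖ ≤ 2 := by
    have h2 : ‖V * ((1 : K →L[ℝ] K) - T)‖ ≤ ‖V‖ * k :=
      le_trans (norm_mul_le V ((1 : K →L[ℝ] K) - T)) (mul_le_mul_of_nonneg_left hnt (norm_nonneg V))
    have h1 : ‖V‖ ≤ 1 + ‖V‖ * k := by
      calc ‖V‖ = ‖1 + V * ((1 : K →L[ℝ] K) - T)‖ := by rw [← hVeq]
      _ ≤ ‖(1 : K →L[ℝ] K)‖ + ‖V * ((1 : K →L[ℝ] K) - T)‖ := by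
          exact norm_add_le (1 : K →L[ℝ] K) (V * ((1 : K →L[ℝ] K) - T))
      _ ≤ 1 + ‖V‖ * k := add_le_add hone h2
    nlinarith [norm_nonneg V]
  have hV1 : ‖V - 1‖ ≤ 2 * k := by
    have h0 : V - 1 = V * ((1 : K →L[ℝ] K) - T) := by
      nth_rewrite 1 [hVeq]; exact add_sub_cancel_left 1 _
    rw [h0]
    calc ‖V * ((1 : K →L[ℝ] K) - T)‖ ≤ ‖V‖ * ‖(1 : K →L[ℝ] K) - T‖ :=
        norm_mul_le V ((1 : K →L[ℝ] K) - T)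
    _ ≤ 2 * k := mul_le_mul hVnorm hnt (norm_nonneg ((1 : K →L[ℝ] K) - T)) (by norm_num)
  refine ⟨R'.comp (K.subtypeL.comp (V.comp Qr)), ?_, ?_, ?_, ?_⟩
  · rintro ζ ⟨x, rfl⟩
    have h0 : Qr (P x) = 0 := by
      ext; simp [Qr, hPP x]
    simp [h0]
  · intro ζ hζ
    have h2 : ∀ x : K, T (V x) = x := fun x => by
      have := congrFun (congrArg DFunLike.coe hTV) x
      simpa [ContinuousLinearMap.mul_apply] using this
    have h3 : D (R' ((V (Qr ζ) : K) : F)) - P (D (R' ((V (Qr ζ) : K) : F)))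
        = ((T (V (Qr ζ)) : K) : F) := (hTapp _).symm
    have h4 : Qr ζ = ⟨ζ, hζ⟩ := hQrker ⟨ζ, hζ⟩
    simp only [ContinuousLinearMap.comp_apply, Submodule.subtypeL_apply]
    rw [h3, h2, h4]
  · intro ζ hζ
    have h4 : Qr ζ = ⟨ζ, hζ⟩ := hQrker ⟨ζ, hζ⟩
    simp only [ContinuousLinearMap.comp_apply, Submodule.subtypeL_apply, h4]
    calc ‖R' ((V ⟨ζ, hζ⟩ : K) : F)‖ ≤ ‖R'‖ * ‖((V ⟨ζ, hζ⟩ : K) : F)‖ := R'.le_opNorm _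
    _ ≤ ‖R'‖ * (2 * ‖ζ‖) := by
        gcongr
        calc ‖((V ⟨ζ, hζ⟩ : K) : F)‖ = ‖V (⟨ζ, hζ⟩ : K)‖ := rfl
        _ ≤ ‖V‖ * ‖(⟨ζ, hζ⟩ : K)‖ := V.le_opNorm _
        _ ≤ 2 * ‖ζ‖ := mul_le_mul hVnorm (le_of_eq rfl) (norm_nonneg _) (by norm_num)
    _ = 2 * ‖R'‖ * ‖ζ‖ := by ring
  · intro ζ hζ
    have h4 : Qr ζ = ⟨ζ, hζ⟩ := hQrker ⟨ζ, hζ⟩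
    simp only [ContinuousLinearMap.comp_apply, Submodule.subtypeL_apply, h4]
    have h5 : R' ((V ⟨ζ, hζ⟩ : K) : F) - R' ζ = R' (((V - 1) (⟨ζ, hζ⟩ : K) : K) : F) := by
      rw [← map_sub]
      congr 1
    rw [h5]
    calc ‖R' (((V - 1) (⟨ζ, hζ⟩ : K) : K) : F)‖
        ≤ ‖R'‖ * ‖((V - 1) (⟨ζ, hζ⟩ : K) : F)‖ := R'.le_opNorm _
    _ ≤ ‖R'‖ * (‖V - 1‖ * ‖(⟨ζ, hζ⟩ : K)‖) := by gcongr; exact (V - 1).le_opNorm _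
    _ ≤ ‖R'‖ * (2 * k * ‖(⟨ζ, hζ⟩ : K)‖) := by
        refine mul_le_mul_of_nonneg_left ?_ (norm_nonneg R')
        exact mul_le_mul_of_nonneg_right hV1 (norm_nonneg _)
    _ = 2 * k * ‖R'‖ * ‖ζ‖ := by
        have hn : ‖(⟨ζ, hζ⟩ : K)‖ = ‖ζ‖ := rfl
        rw [hn]; ring
end
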